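/- arXiv:2509.04134 — 2 statements merged into one kernel-verified Lean document; each statement's English description precedes it below -/
import Mathlib

section
/- Let A be a unital C*-algebra and h₁, h₂ ∈ A self-adjoint. Then ‖h₁ - h₂‖·(1 - (‖h₁‖+‖h₂‖)/2) ≤ ‖e^{ih₁} - e^{ih₂}‖. -/
open NormedSpace intervalIntegral

section aux

variable {A : Type*} [CStarAlgebra A]

lemma aux_smul_comm (k : A) (t : ℝ) : t • (Complex.I • k) = Complex.I • (t • k) :=
  smul_comm t Complex.I k

lemma aux_exp_mem_unitary {k : A} (hk : IsSelfAdjoint k) :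
    NormedSpace.exp (Complex.I • k) ∈ unitary A :=
  by let +nondep : NormedAlgebra ℚ A := .restrictScalars ℚ ℂ A; exact exp_mem_unitary_of_mem_skewAdjoint (hk.smul_mem_skewAdjoint Complex.conj_I)

lemma aux_norm_exp [Nontrivial A] {k : A} (hk : IsSelfAdjoint k) :
    ‖NormedSpace.exp (Complex.I • k)‖ = 1 :=
  CStarRing.norm_of_mem_unitary (aux_exp_mem_unitary hk)

lemma aux_norm_exp_smul [Nontrivial A] {k : A} (hk : IsSelfAdjoint k) (t : ℝ) :
    ‖NormedSpace.exp (t • (Complex.I • k))‖ = 1 := by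
  rw [aux_smul_comm]
  exact aux_norm_exp ((IsSelfAdjoint.all t).smul hk)

lemma aux_norm_exp_sub_one [Nontrivial A] {k : A} (hk : IsSelfAdjoint k) :
    ‖NormedSpace.exp (Complex.I • k) - 1‖ ≤ ‖k‖ := by
  set a : A := Complex.I • k with ha
  have hna : ‖a‖ = ‖k‖ := by rw [ha, norm_smul, Complex.norm_I, one_mul]
  have hderiv : ∀ t ∈ Set.uIcc (0 : ℝ) 1,
      HasDerivAt (fun u : ℝ => exp (u • a)) (exp (t • a) * a) t := fun t _ =>
    hasDerivAt_exp_smul_const (𝕂 := ℝ) a t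
  have hcont : Continuous fun t : ℝ => exp (t • a) * a :=
    by let +nondep : NormedAlgebra ℚ A := .restrictScalars ℚ ℂ A; exact (exp_continuous.comp (continuous_id.smul continuous_const)).mul continuous_const
  have hFTC := integral_eq_sub_of_hasDerivAt hderiv (hcont.intervalIntegrable 0 1)
  have hbound : ‖∫ t in (0:ℝ)..1, exp (t • a) * a‖ ≤ ‖k‖ * |1 - 0| := by
    apply norm_integral_le_of_norm_le_const
    intro t _
    calc ‖exp (t • a) * a‖ ≤ ‖exp (t • a)‖ * ‖a‖ := norm_mul_le _ _
      _ = ‖k‖ := by rw [ha, aux_norm_exp_smul hk, one_mul, norm_smul, Complex.norm_I, one_mul]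
  rw [hFTC] at hbound
  simpa using hbound

end aux

/-- Lemma `lem:expinequalities`, lower bound.
For self-adjoint elements `h₁ h₂` of a unital C*-algebra `A`,
`‖h₁ - h₂‖ (1 - (‖h₁‖ + ‖h₂‖)/2) ≤ ‖e^{ih₁} - e^{ih₂}‖`. -/
theorem stmt1 {A : Type*} [CStarAlgebra A] (h₁ h₂ : A)
    (hh₁ : IsSelfAdjoint h₁) (hh₂ : IsSelfAdjoint h₂) :
    ‖h₁ - h₂‖ * (1 - (‖h₁‖ + ‖h₂‖) / 2) ≤
      ‖NormedSpace.exp (Complex.I • h₁) - NormedSpace.exp (Complex.I • h₂)‖ := by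
  rcases subsingleton_or_nontrivial A with hA | hA
  · have h : h₁ - h₂ = 0 := Subsingleton.elim _ _
    rw [h, norm_zero, zero_mul]
    exact norm_nonneg _
  set a₁ : A := Complex.I • h₁ with ha₁
  set a₂ : A := Complex.I • h₂ with ha₂
  set d : A := a₁ - a₂ with hd
  have hnd : ‖d‖ = ‖h₁ - h₂‖ := by
    rw [hd, ha₁, ha₂, ← smul_sub, norm_smul, Complex.norm_I, one_mul]
  set f : ℝ → A := fun t => exp (t • a₁) * exp ((1 - t) • a₂) with hf
  set F : ℝ → A := fun t => exp (t • a₁) * d * exp ((1 - t) • a₂) with hF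
  have hderiv : ∀ t ∈ Set.uIcc (0 : ℝ) 1, HasDerivAt f (F t) t := by
    intro t _
    have d1 : HasDerivAt (fun u : ℝ => exp (u • a₁)) (exp (t • a₁) * a₁) t :=
      hasDerivAt_exp_smul_const (𝕂 := ℝ) a₁ t
    have d2' : HasDerivAt (fun u : ℝ => exp (u • a₂)) (a₂ * exp ((1 - t) • a₂)) (1 - t) :=
      hasDerivAt_exp_smul_const' (𝕂 := ℝ) a₂ (1 - t)
    have hg : HasDerivAt (fun u : ℝ => 1 - u) (-1 : ℝ) t := by
      simpa using (hasDerivAt_id t).const_sub 1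
    have d2 : HasDerivAt (fun u : ℝ => exp ((1 - u) • a₂))
        ((-1 : ℝ) • (a₂ * exp ((1 - t) • a₂))) t := d2'.scomp t hg
    have key := d1.mul d2
    have heq : exp (t • a₁) * a₁ * exp ((1 - t) • a₂) +
        exp (t • a₁) * ((-1 : ℝ) • (a₂ * exp ((1 - t) • a₂))) = F t := by
      rw [hF, hd]
      simp only [neg_one_smul, mul_neg]
      noncomm_ring
    rw [hf]
    exact heq ▸ key
  have hcont : Continuous F := by
    refine (Continuous.mul ?_ continuous_const).mul ?_
    · let +nondep : NormedAlgebra ℚ A := .restrictScalars ℚ ℂ A; exact exp_continuous.comp (continuous_id.smul continuous_const)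
    · let +nondep : NormedAlgebra ℚ A := .restrictScalars ℚ ℂ A; exact exp_continuous.comp ((continuous_const.sub continuous_id).smul continuous_const)
  have hFTC := integral_eq_sub_of_hasDerivAt hderiv (hcont.intervalIntegrable 0 1)
  have hf1 : f 1 = exp a₁ := by simp [hf]
  have hf0 : f 0 = exp a₂ := by simp [hf]
  have hint : (∫ t in (0:ℝ)..1, (F t - d)) = (exp a₁ - exp a₂) - d := by
    rw [integral_sub (hcont.intervalIntegrable 0 1) intervalIntegrable_const, hFTC, hf1, hf0]
    simp
  have hptbound : ∀ t ∈ Set.uIoc (0:ℝ) 1,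
      ‖F t - d‖ ≤ ‖d‖ * (t * ‖h₁‖ + (1 - t) * ‖h₂‖) := by
    intro t ht
    rw [Set.uIoc_of_le (by norm_num)] at ht
    obtain ⟨ht0, ht1⟩ := ht
    set X := exp (t • a₁) with hX
    set Y := exp ((1 - t) • a₂) with hY
    have hXn : ‖X‖ = 1 := aux_norm_exp_smul hh₁ t
    have hXm : ‖X - 1‖ ≤ t * ‖h₁‖ := by
      have hXe : X = exp (Complex.I • (t • h₁)) := by
        rw [hX, ha₁, aux_smul_comm]
      rw [hXe]
      calc ‖exp (Complex.I • (t • h₁)) - 1‖ ≤ ‖t • h₁‖ :=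
            aux_norm_exp_sub_one ((IsSelfAdjoint.all t).smul hh₁)
        _ = t * ‖h₁‖ := by
            rw [norm_smul, Real.norm_eq_abs, _root_.abs_of_pos ht0]
    have hYm : ‖Y - 1‖ ≤ (1 - t) * ‖h₂‖ := by
      have hYe : Y = exp (Complex.I • ((1 - t) • h₂)) := by
        rw [hY, ha₂, aux_smul_comm]
      rw [hYe]
      calc ‖exp (Complex.I • ((1 - t) • h₂)) - 1‖ ≤ ‖(1 - t) • h₂‖ :=
            aux_norm_exp_sub_one ((IsSelfAdjoint.all (1 - t)).smul hh₂)
        _ = (1 - t) * ‖h₂‖ := by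
            rw [norm_smul, Real.norm_eq_abs, _root_.abs_of_nonneg (by linarith)]
    have hsplit : X * d * Y - d = X * d * (Y - 1) + (X - 1) * d := by noncomm_ring
    simp only [hF]
    rw [← hX, ← hY, hsplit]
    calc ‖X * d * (Y - 1) + (X - 1) * d‖
        ≤ ‖X * d * (Y - 1)‖ + ‖(X - 1) * d‖ := norm_add_le _ _
      _ ≤ ‖X‖ * ‖d‖ * ‖Y - 1‖ + ‖X - 1‖ * ‖d‖ := by
          gcongr
          · exact (norm_mul_le _ _).trans (by gcongr; exact norm_mul_le _ _)
          · exact norm_mul_le _ _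
      _ ≤ 1 * ‖d‖ * ((1 - t) * ‖h₂‖) + t * ‖h₁‖ * ‖d‖ := by
          rw [hXn]
          gcongr
      _ = ‖d‖ * (t * ‖h₁‖ + (1 - t) * ‖h₂‖) := by ring
  have hgint : IntervalIntegrable (fun t : ℝ => ‖d‖ * (t * ‖h₁‖ + (1 - t) * ‖h₂‖))
      MeasureTheory.volume 0 1 := by
    apply Continuous.intervalIntegrable
    fun_prop
  have hi1 : IntervalIntegrable (fun t : ℝ => t * ‖h₁‖) MeasureTheory.volume 0 1 := by
    apply Continuous.intervalIntegrable; fun_prop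
  have hi2 : IntervalIntegrable (fun t : ℝ => (1 - t) * ‖h₂‖) MeasureTheory.volume 0 1 := by
    apply Continuous.intervalIntegrable; fun_prop
  have e1 : (∫ t in (0:ℝ)..1, t * ‖h₁‖) = ‖h₁‖ / 2 := by
    rw [intervalIntegral.integral_mul_const, integral_id]; ring
  have e2 : (∫ t in (0:ℝ)..1, (1 - t) * ‖h₂‖) = ‖h₂‖ / 2 := by
    rw [intervalIntegral.integral_mul_const,
      intervalIntegral.integral_sub intervalIntegrable_const intervalIntegral.intervalIntegrable_id,
      integral_id, intervalIntegral.integral_const]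
    norm_num
    ring
  have hintval : (∫ t in (0:ℝ)..1, (t * ‖h₁‖ + (1 - t) * ‖h₂‖)) = (‖h₁‖ + ‖h₂‖) / 2 := by
    rw [intervalIntegral.integral_add hi1 hi2, e1, e2]; ring
  have hnormint : ‖(exp a₁ - exp a₂) - d‖ ≤ ‖d‖ * ((‖h₁‖ + ‖h₂‖) / 2) := by
    rw [← hint]
    refine (norm_integral_le_abs_of_norm_le
      (MeasureTheory.ae_restrict_of_forall_mem measurableSet_uIoc hptbound)
      hgint).trans (le_of_eq ?_)
    rw [intervalIntegral.integral_const_mul, hintval]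
    exact _root_.abs_of_nonneg (by positivity)
  have htri : ‖d‖ ≤ ‖exp a₁ - exp a₂‖ + ‖d‖ * ((‖h₁‖ + ‖h₂‖) / 2) := by
    calc ‖d‖ = ‖(exp a₁ - exp a₂) - ((exp a₁ - exp a₂) - d)‖ := by
          congr 1; abel
      _ ≤ ‖exp a₁ - exp a₂‖ + ‖(exp a₁ - exp a₂) - d‖ := norm_sub_le _ _
      _ ≤ _ := by gcongr
  rw [hnd] at htri
  nlinarith [norm_nonneg (h₁ - h₂)]
end

section
/- Let A be a separable unital C*-algebra with stabilization A^s = A ⊗ K, and let e = e₁₁ be a rank-one projection. For α ∈ Aut(A^s) fixing 1⊗e, the sum v_α = Σᵢ α(1⊗e_{i1})(1⊗e_{1i}) converges strictly in M(A^s) to a unitary, and v_α(1⊗T)v_α* = α(1⊗T) for every compact operator T. -/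
open Filter

set_option maxHeartbeats 1000000
set_option synthInstance.maxHeartbeats 400000

private lemma sum_mul_sum_diag {B : Type*} [NonUnitalNonAssocRing B] (f g h : ℕ → B)
    (hfg : ∀ i j, f i * g j = if i = j then h i else 0) (n m : ℕ) :
    (∑ i ∈ Finset.range n, f i) * ∑ j ∈ Finset.range m, g j
      = ∑ i ∈ Finset.range (min n m), h i := by
  rw [Finset.sum_mul_sum]
  have h1 : ∀ i, ∑ j ∈ Finset.range m, (if i = j then h i else 0)
      = if i ∈ Finset.range m then h i else 0 :=
    fun i => Finset.sum_ite_eq (Finset.range m) i (fun _ => h i)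
  simp only [hfg, h1, Finset.sum_ite_mem]
  congr 1
  ext j
  simp only [Finset.mem_inter, Finset.mem_range, lt_min_iff]

/-- Lemma `lem:alpha_on_cpts`. We model the stabilization
`A^s = A ⊗ K` of a separable unital C*-algebra `A` by a (non-unital) C*-algebra `B`
equipped with a system `e i j` of matrix units corresponding to `1 ⊗ e_{ij}`, whose
partial sums `1 ⊗ pₙ = Σ_{i<n} e i i` form an approximate unit of `B`.  For an
automorphism `α` of `B` fixing `1 ⊗ e = e 0 0`, the partial sums
`Σ_{i<n} α(e i 0)·(e 0 i)` are uniformly bounded and converge strictly in the multiplier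
algebra `M(B)` to a unitary `v`, and `v (1⊗T) v* = α(1⊗T)` for every `T` compact, i.e.
for every element of the closed linear span of the matrix units. -/
theorem stmt14 {B : Type*} [NonUnitalCStarAlgebra B]
    [StarModule ℂ B] [TopologicalSpace.SeparableSpace B]
    (e : ℕ → ℕ → B)
    (hmul : ∀ i j k l, e i j * e k l = if j = k then e i l else 0)
    (hstar : ∀ i j, star (e i j) = e j i)
    (happrox : ∀ b : B,
      Tendsto (fun n => b * ∑ i ∈ Finset.range n, e i i) atTop (nhds b) ∧
      Tendsto (fun n => (∑ i ∈ Finset.range n, e i i) * b) atTop (nhds b))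
    (α : B ≃⋆ₐ[ℂ] B) (hα : α (e 0 0) = e 0 0) :
    (∀ n, ‖∑ i ∈ Finset.range n, α (e i 0) * e 0 i‖ ≤ 1) ∧
    ∃ v : DoubleCentralizer ℂ B, v ∈ unitary (DoubleCentralizer ℂ B) ∧
      (∀ b : B, Tendsto (fun n => (∑ i ∈ Finset.range n, α (e i 0) * e 0 i) * b)
        atTop (nhds (v.fst b))) ∧
      (∀ b : B, Tendsto (fun n => b * ∑ i ∈ Finset.range n, α (e i 0) * e 0 i)
        atTop (nhds (v.snd b))) ∧
      ∀ x ∈ closure (Submodule.span ℂ (Set.range fun p : ℕ × ℕ => e p.1 p.2) : Set B),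
        v * (x : DoubleCentralizer ℂ B) * star v = ((α x : B) : DoubleCentralizer ℂ B) := by
  let s : ℕ → B := fun n => ∑ i ∈ Finset.range n, α (e i 0) * e 0 i
  let p : ℕ → B := fun n => ∑ i ∈ Finset.range n, e i i
  let q : ℕ → B := fun n => ∑ i ∈ Finset.range n, α (e i i)
  have hαc : Continuous α := (NonUnitalStarAlgHom.isometry α α.injective).continuous
  -- star of s
  have hstar_s : ∀ n, star (s n) = ∑ i ∈ Finset.range n, e i 0 * α (e 0 i) := by
    intro n
    show star (∑ i ∈ Finset.range n, α (e i 0) * e 0 i) = _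
    rw [star_sum]
    refine Finset.sum_congr rfl fun i _ => ?_
    rw [star_mul, hstar, ← map_star α, hstar]
  -- basic products
  have hpp : ∀ n m, p n * p m = p (min n m) := by
    intro n m
    refine sum_mul_sum_diag _ _ _ (fun i j => ?_) n m
    rw [hmul]
    split_ifs with h
    · rw [h]
    · rfl
  have hss : ∀ n m, star (s n) * s m = p (min n m) := by
    intro n m
    rw [hstar_s]
    refine sum_mul_sum_diag _ _ _ (fun i j => ?_) n m
    rw [mul_assoc, ← mul_assoc (α (e 0 i)), ← map_mul, hmul]
    split_ifs with h
    · subst h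
      rw [hα, hmul, if_pos rfl, hmul, if_pos rfl]
    · rw [map_zero, zero_mul, mul_zero]
  have hsstar : ∀ n m, s n * star (s m) = q (min n m) := by
    intro n m
    rw [hstar_s]
    refine sum_mul_sum_diag _ _ _ (fun i j => ?_) n m
    rw [mul_assoc, ← mul_assoc (e 0 i), hmul]
    split_ifs with h
    · subst h
      rw [← hα, ← map_mul, ← map_mul, hmul, if_pos rfl, hmul, if_pos rfl]
    · rw [zero_mul, mul_zero]
  have hsp : ∀ n m, s n * p m = s (min n m) := by
    intro n m
    refine sum_mul_sum_diag _ _ _ (fun i j => ?_) n m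
    rw [mul_assoc, hmul]
    split_ifs with h
    · subst h; rfl
    · rw [mul_zero]
  have hqs : ∀ n m, q n * s m = s (min n m) := by
    intro n m
    refine sum_mul_sum_diag _ _ _ (fun i j => ?_) n m
    rw [← mul_assoc, ← map_mul, hmul]
    split_ifs with h
    · subst h; rfl
    · rw [map_zero, zero_mul]
  -- products with matrix units
  have hse : ∀ k l n, s n * e k l = if k < n then α (e k 0) * e 0 l else 0 := by
    intro k l n
    show (∑ i ∈ Finset.range n, α (e i 0) * e 0 i) * e k l = _
    rw [Finset.sum_mul]
    have h1 : ∀ i, (α (e i 0) * e 0 i) * e k l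
        = if i = k then α (e k 0) * e 0 l else 0 := by
      intro i
      rw [mul_assoc, hmul]
      split_ifs with h
      · subst h; rfl
      · rw [mul_zero]
    simp only [h1]
    rw [Finset.sum_ite_eq' (Finset.range n) k (fun _ => α (e k 0) * e 0 l)]
    simp only [Finset.mem_range]
  have hαse : ∀ k l n, α (e k l) * s n = if l < n then α (e k 0) * e 0 l else 0 := by
    intro k l n
    show α (e k l) * ∑ i ∈ Finset.range n, α (e i 0) * e 0 i = _
    rw [Finset.mul_sum]
    have h1 : ∀ i, α (e k l) * (α (e i 0) * e 0 i)
        = if l = i then α (e k 0) * e 0 l else 0 := by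
      intro i
      rw [← mul_assoc, ← map_mul, hmul]
      split_ifs with h
      · subst h; rfl
      · rw [map_zero, zero_mul]
    simp only [h1]
    rw [Finset.sum_ite_eq (Finset.range n) l (fun _ => α (e k 0) * e 0 l)]
    simp only [Finset.mem_range]
  -- norm bounds
  have hp_star : ∀ n, star (p n) = p n := by
    intro n
    show star (∑ i ∈ Finset.range n, e i i) = _
    rw [star_sum]
    exact Finset.sum_congr rfl fun i _ => hstar i i
  have hpn : ∀ n, ‖p n‖ ≤ 1 := by
    intro n
    have h1 : p n * p n = p n := by rw [hpp n n, min_self]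
    have h2 := CStarRing.norm_star_mul_self (x := p n)
    rw [hp_star, h1] at h2
    nlinarith [norm_nonneg (p n)]
  have hsn : ∀ n, ‖s n‖ ≤ 1 := by
    intro n
    have h1 : star (s n) * s n = p n := by rw [hss n n, min_self]
    have h2 := CStarRing.norm_star_mul_self (x := s n)
    rw [h1] at h2
    nlinarith [norm_nonneg (s n), hpn n, norm_nonneg (p n)]
  -- approximate unit on the right via α
  have hqα : ∀ n, α (p n) = q n := by
    intro n
    show α (∑ i ∈ Finset.range n, e i i) = ∑ i ∈ Finset.range n, α (e i i)
    exact map_sum α _ _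
  have hq_right : ∀ b : B, Tendsto (fun n => b * q n) atTop (nhds b) := by
    intro b
    have h1 : Tendsto (fun n => α (α.symm b * p n)) atTop (nhds (α (α.symm b))) :=
      (hαc.tendsto _).comp (happrox (α.symm b)).1
    have h2 : (fun n => α (α.symm b * p n)) = fun n => b * q n := by
      funext n
      rw [map_mul, α.apply_symm_apply, hqα]
    rwa [h2, α.apply_symm_apply] at h1
  have hq_left : ∀ b : B, Tendsto (fun n => q n * b) atTop (nhds b) := by
    intro b
    have h1 : Tendsto (fun n => α (p n * α.symm b)) atTop (nhds (α (α.symm b))) :=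
      (hαc.tendsto _).comp (happrox (α.symm b)).2
    have h2 : (fun n => α (p n * α.symm b)) = fun n => q n * b := by
      funext n
      rw [map_mul, α.apply_symm_apply, hqα]
    rwa [h2, α.apply_symm_apply] at h1
  -- Cauchy estimates
  have keyL : ∀ (b : B) (n m : ℕ), n ≤ m →
      ‖s m * b - s n * b‖ ≤ 2 * ‖p m * b - p n * b‖ := by
    intro b n m hnm
    have e1 : s m * p m = s m := by rw [hsp, min_self]
    have e2 : s m * p n = s n := by rw [hsp, min_eq_right hnm]
    have e3 : s n * p m = s n := by rw [hsp, min_eq_left hnm]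
    have e4 : s n * p n = s n := by rw [hsp, min_self]
    have h1 : (s m - s n) * ((p m - p n) * b) = s m * b - s n * b := by
      rw [← mul_assoc]
      simp only [sub_mul, mul_sub]
      rw [e1, e2, e3, e4]
      abel
    have h2 : ‖s m - s n‖ ≤ 2 := by
      have := norm_sub_le (s m) (s n)
      linarith [hsn m, hsn n]
    calc ‖s m * b - s n * b‖ = ‖(s m - s n) * ((p m - p n) * b)‖ := by rw [h1]
      _ ≤ ‖s m - s n‖ * ‖(p m - p n) * b‖ := norm_mul_le _ _
      _ ≤ 2 * ‖(p m - p n) * b‖ := by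
          have := norm_nonneg ((p m - p n) * b)
          nlinarith
      _ = 2 * ‖p m * b - p n * b‖ := by rw [sub_mul]
  have keyR : ∀ (b : B) (n m : ℕ), n ≤ m →
      ‖b * s m - b * s n‖ ≤ 2 * ‖b * q m - b * q n‖ := by
    intro b n m hnm
    have e1 : q m * s m = s m := by rw [hqs, min_self]
    have e2 : q m * s n = s n := by rw [hqs, min_eq_right hnm]
    have e3 : q n * s m = s n := by rw [hqs, min_eq_left hnm]
    have e4 : q n * s n = s n := by rw [hqs, min_self]
    have h1 : (b * (q m - q n)) * (s m - s n) = b * s m - b * s n := by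
      simp only [mul_sub, sub_mul, mul_assoc]
      rw [e1, e2, e3, e4]
      abel
    have h2 : ‖s m - s n‖ ≤ 2 := by
      have := norm_sub_le (s m) (s n)
      linarith [hsn m, hsn n]
    calc ‖b * s m - b * s n‖ = ‖(b * (q m - q n)) * (s m - s n)‖ := by rw [h1]
      _ ≤ ‖b * (q m - q n)‖ * ‖s m - s n‖ := norm_mul_le _ _
      _ ≤ ‖b * (q m - q n)‖ * 2 := by
          have := norm_nonneg (b * (q m - q n))
          nlinarith
      _ = 2 * ‖b * q m - b * q n‖ := by rw [mul_sub]; ring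
  -- existence of limits
  have hLex : ∀ b : B, ∃ c, Tendsto (fun n => s n * b) atTop (nhds c) := by
    intro b
    refine cauchySeq_tendsto_of_complete ?_
    have hpb : CauchySeq (fun n => p n * b) := (happrox b).2.cauchySeq
    rw [Metric.cauchySeq_iff'] at hpb ⊢
    intro ε hε
    obtain ⟨N, hN⟩ := hpb (ε / 2) (by linarith)
    refine ⟨N, fun n hn => ?_⟩
    have h1 := keyL b N n hn
    have h2 := hN n hn
    rw [dist_eq_norm] at h2 ⊢
    linarith
  have hRex : ∀ b : B, ∃ c, Tendsto (fun n => b * s n) atTop (nhds c) := by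
    intro b
    refine cauchySeq_tendsto_of_complete ?_
    have hqb : CauchySeq (fun n => b * q n) := (hq_right b).cauchySeq
    rw [Metric.cauchySeq_iff'] at hqb ⊢
    intro ε hε
    obtain ⟨N, hN⟩ := hqb (ε / 2) (by linarith)
    refine ⟨N, fun n hn => ?_⟩
    have h1 := keyR b N n hn
    have h2 := hN n hn
    rw [dist_eq_norm] at h2 ⊢
    linarith
  choose 𝓛 h𝓛 using hLex
  choose 𝓡 h𝓡 using hRex
  -- bounded linear maps
  have h𝓛norm : ∀ b, ‖𝓛 b‖ ≤ 1 * ‖b‖ := by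
    intro b
    refine le_of_tendsto (h𝓛 b).norm (Eventually.of_forall fun n => ?_)
    calc ‖s n * b‖ ≤ ‖s n‖ * ‖b‖ := norm_mul_le _ _
      _ ≤ 1 * ‖b‖ := by
          have := norm_nonneg b
          nlinarith [hsn n]
  have h𝓡norm : ∀ b, ‖𝓡 b‖ ≤ 1 * ‖b‖ := by
    intro b
    refine le_of_tendsto (h𝓡 b).norm (Eventually.of_forall fun n => ?_)
    calc ‖b * s n‖ ≤ ‖b‖ * ‖s n‖ := norm_mul_le _ _
      _ ≤ 1 * ‖b‖ := by
          have := norm_nonneg b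
          nlinarith [hsn n]
  let L : B →L[ℂ] B := LinearMap.mkContinuous
    { toFun := 𝓛
      map_add' := fun x y => tendsto_nhds_unique (h𝓛 (x + y))
        (by simpa only [mul_add] using (h𝓛 x).add (h𝓛 y))
      map_smul' := fun c x => tendsto_nhds_unique (h𝓛 (c • x))
        (by simpa only [mul_smul_comm, RingHom.id_apply] using (h𝓛 x).const_smul c) } 1 h𝓛norm
  let R : B →L[ℂ] B := LinearMap.mkContinuous
    { toFun := 𝓡
      map_add' := fun x y => tendsto_nhds_unique (h𝓡 (x + y))
        (by simpa only [add_mul] using (h𝓡 x).add (h𝓡 y))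
      map_smul' := fun c x => tendsto_nhds_unique (h𝓡 (c • x))
        (by simpa only [smul_mul_assoc, RingHom.id_apply] using (h𝓡 x).const_smul c) } 1 h𝓡norm
  -- the double centralizer
  let v : DoubleCentralizer ℂ B :=
    { toProd := (L, R)
      central := fun x y => by
        show 𝓡 x * y = x * 𝓛 y
        refine tendsto_nhds_unique ?_ (((h𝓛 y).const_mul x))
        have h1 : (fun n => x * (s n * y)) = fun n => (x * s n) * y := by
          funext n; rw [mul_assoc]
        rw [h1]
        exact (h𝓡 x).mul tendsto_const_nhds }
  have hvfst : ∀ b, v.fst b = 𝓛 b := fun _ => rfl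
  have hvsnd : ∀ b, v.snd b = 𝓡 b := fun _ => rfl
  -- key identities
  have keyA : ∀ c : B, 𝓡 (star (𝓛 c)) = star c := by
    intro c
    have step : ∀ m, star (𝓛 c) * s m = star c * p m := by
      intro m
      refine tendsto_nhds_unique (((h𝓛 c).star).mul tendsto_const_nhds) ?_
      refine Tendsto.congr' ?_ (tendsto_const_nhds (x := star c * p m))
      filter_upwards [eventually_ge_atTop m] with n hn
      rw [star_mul, mul_assoc, hss n m, min_eq_right hn]
    refine tendsto_nhds_unique (h𝓡 (star (𝓛 c))) ?_
    have h1 : (fun n => star (𝓛 c) * s n) = fun n => star c * p n := funext step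
    rw [show (fun n => star (𝓛 c) * s n) = fun n => star c * p n from funext step]
    exact (happrox (star c)).1
  have keyB : ∀ c : B, 𝓛 (star (𝓡 c)) = star c := by
    intro c
    have step : ∀ m, s m * star (𝓡 c) = q m * star c := by
      intro m
      refine tendsto_nhds_unique (((h𝓡 c).star).const_mul (s m)) ?_
      refine Tendsto.congr' ?_ (tendsto_const_nhds (x := q m * star c))
      filter_upwards [eventually_ge_atTop m] with n hn
      rw [star_mul, ← mul_assoc, hsstar m n, min_eq_left hn]
    refine tendsto_nhds_unique (h𝓛 (star (𝓡 c))) ?_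
    rw [show (fun n => s n * star (𝓡 c)) = fun n => q n * star c from funext step]
    exact hq_left (star c)
  -- unitarity
  have hv1 : star v * v = 1 := by
    refine DoubleCentralizer.ext ℂ B _ _ (Prod.ext ?_ ?_)
    · refine ContinuousLinearMap.ext fun b => ?_
      show star (𝓡 (star (𝓛 b))) = b
      rw [keyA, star_star]
    · refine ContinuousLinearMap.ext fun b => ?_
      show 𝓡 (star (𝓛 (star b))) = b
      rw [keyA, star_star]
  have hv2 : v * star v = 1 := by
    refine DoubleCentralizer.ext ℂ B _ _ (Prod.ext ?_ ?_)
    · refine ContinuousLinearMap.ext fun b => ?_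
      show 𝓛 (star (𝓡 (star b))) = b
      rw [keyB, star_star]
    · refine ContinuousLinearMap.ext fun b => ?_
      show star (𝓛 (star (𝓡 b))) = b
      rw [keyB, star_star]
  -- intertwining on matrix units
  have hinter : ∀ k l, v * ((e k l : B) : DoubleCentralizer ℂ B)
      = ((α (e k l) : B) : DoubleCentralizer ℂ B) * v := by
    intro k l
    have hw1 : ∀ b, 𝓛 (e k l * b) = (α (e k 0) * e 0 l) * b := by
      intro b
      refine tendsto_nhds_unique (h𝓛 (e k l * b)) ?_
      refine Tendsto.congr' ?_ (tendsto_const_nhds (x := (α (e k 0) * e 0 l) * b))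
      filter_upwards [eventually_gt_atTop k] with n hn
      rw [← mul_assoc, hse k l n, if_pos hn]
    have hw2 : ∀ b, α (e k l) * 𝓛 b = (α (e k 0) * e 0 l) * b := by
      intro b
      refine tendsto_nhds_unique ((h𝓛 b).const_mul (α (e k l))) ?_
      refine Tendsto.congr' ?_ (tendsto_const_nhds (x := (α (e k 0) * e 0 l) * b))
      filter_upwards [eventually_gt_atTop l] with n hn
      rw [← mul_assoc, hαse k l n, if_pos hn]
    have hw3 : ∀ b, 𝓡 b * e k l = b * (α (e k 0) * e 0 l) := by
      intro b
      refine tendsto_nhds_unique ((h𝓡 b).mul_const (e k l)) ?_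
      refine Tendsto.congr' ?_ (tendsto_const_nhds (x := b * (α (e k 0) * e 0 l)))
      filter_upwards [eventually_gt_atTop k] with n hn
      rw [mul_assoc, hse k l n, if_pos hn]
    have hw4 : ∀ b, 𝓡 (b * α (e k l)) = b * (α (e k 0) * e 0 l) := by
      intro b
      refine tendsto_nhds_unique (h𝓡 (b * α (e k l))) ?_
      refine Tendsto.congr' ?_ (tendsto_const_nhds (x := b * (α (e k 0) * e 0 l)))
      filter_upwards [eventually_gt_atTop l] with n hn
      rw [mul_assoc, hαse k l n, if_pos hn]
    refine DoubleCentralizer.ext ℂ B _ _ (Prod.ext ?_ ?_)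
    · refine ContinuousLinearMap.ext fun b => ?_
      show 𝓛 (e k l * b) = α (e k l) * 𝓛 b
      rw [hw1, hw2]
    · refine ContinuousLinearMap.ext fun b => ?_
      show 𝓡 b * e k l = 𝓡 (b * α (e k l))
      rw [hw3, hw4]
  -- continuity of the coercion
  have hcoe_norm : ∀ b : B, ‖(b : DoubleCentralizer ℂ B)‖ ≤ ‖b‖ := by
    intro b
    rw [DoubleCentralizer.norm_def]
    refine max_le ?_ ?_
    · exact ContinuousLinearMap.opNorm_mul_apply_le ℂ B b
    · exact (ContinuousLinearMap.opNorm_mul_flip_apply ℂ b).le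
  have hcoe_cont : Continuous ((↑) : B → DoubleCentralizer ℂ B) := by
    have := AddMonoidHomClass.continuous_of_bound
      (DoubleCentralizer.coeHom (𝕜 := ℂ) (A := B)) 1 (fun b => by
        simpa using hcoe_norm b)
    exact this
  -- the intertwining relation on the closed span
  have hspan : Set.EqOn (fun y : B => v * (y : DoubleCentralizer ℂ B))
      (fun y : B => ((α y : B) : DoubleCentralizer ℂ B) * v)
      ((Submodule.span ℂ (Set.range fun pr : ℕ × ℕ => e pr.1 pr.2) : Submodule ℂ B) : Set B) := by
    let F : B →ₗ[ℂ] DoubleCentralizer ℂ B :=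
      { toFun := fun x => v * (x : DoubleCentralizer ℂ B)
        map_add' := fun x y => by
          show v * ((x + y : B) : DoubleCentralizer ℂ B)
            = v * (x : DoubleCentralizer ℂ B) + v * (y : DoubleCentralizer ℂ B)
          rw [show ((x + y : B) : DoubleCentralizer ℂ B)
            = (x : DoubleCentralizer ℂ B) + (y : DoubleCentralizer ℂ B) from
            map_add (DoubleCentralizer.coeHom (𝕜 := ℂ) (A := B)) x y, mul_add]
        map_smul' := fun c x => by
          show v * ((c • x : B) : DoubleCentralizer ℂ B)
            = (RingHom.id ℂ) c • (v * (x : DoubleCentralizer ℂ B))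
          rw [show ((c • x : B) : DoubleCentralizer ℂ B) = c • (x : DoubleCentralizer ℂ B) from
            map_smul (DoubleCentralizer.coeHom (𝕜 := ℂ) (A := B)) c x, mul_smul_comm]
          rfl }
    let G : B →ₗ[ℂ] DoubleCentralizer ℂ B :=
      { toFun := fun x => ((α x : B) : DoubleCentralizer ℂ B) * v
        map_add' := fun x y => by
          show ((α (x + y) : B) : DoubleCentralizer ℂ B) * v
            = ((α x : B) : DoubleCentralizer ℂ B) * v + ((α y : B) : DoubleCentralizer ℂ B) * v
          rw [map_add α, show ((α x + α y : B) : DoubleCentralizer ℂ B)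
            = ((α x : B) : DoubleCentralizer ℂ B) + ((α y : B) : DoubleCentralizer ℂ B) from
            map_add (DoubleCentralizer.coeHom (𝕜 := ℂ) (A := B)) _ _, add_mul]
        map_smul' := fun c x => by
          show ((α (c • x) : B) : DoubleCentralizer ℂ B) * v
            = (RingHom.id ℂ) c • (((α x : B) : DoubleCentralizer ℂ B) * v)
          rw [map_smul α, show ((c • α x : B) : DoubleCentralizer ℂ B)
            = c • ((α x : B) : DoubleCentralizer ℂ B) from
            map_smul (DoubleCentralizer.coeHom (𝕜 := ℂ) (A := B)) _ _, smul_mul_assoc]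
          rfl }
    intro x hx
    show v * (x : DoubleCentralizer ℂ B) = ((α x : B) : DoubleCentralizer ℂ B) * v
    have H : Set.EqOn ⇑F ⇑G (Set.range fun pr : ℕ × ℕ => e pr.1 pr.2) := by
      rintro _ ⟨⟨k, l⟩, rfl⟩
      exact hinter k l
    exact LinearMap.eqOn_span (f := F) (g := G) H hx
  have hFc : Continuous fun y : B => v * (y : DoubleCentralizer ℂ B) :=
    continuous_const.mul hcoe_cont
  have hGc : Continuous fun y : B => ((α y : B) : DoubleCentralizer ℂ B) * v :=
    (hcoe_cont.comp hαc).mul continuous_const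
  have hclos : Set.EqOn (fun y : B => v * (y : DoubleCentralizer ℂ B))
      (fun y : B => ((α y : B) : DoubleCentralizer ℂ B) * v)
      (closure ((Submodule.span ℂ (Set.range fun pr : ℕ × ℕ => e pr.1 pr.2) :
        Submodule ℂ B) : Set B)) :=
    Set.EqOn.closure hspan hFc hGc
  refine ⟨hsn, v, (Unitary.mem_iff).mpr ⟨hv1, hv2⟩, fun b => h𝓛 b, fun b => h𝓡 b, ?_⟩
  intro x hx
  have h1 : v * (x : DoubleCentralizer ℂ B) = ((α x : B) : DoubleCentralizer ℂ B) * v :=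
    hclos hx
  rw [h1, mul_assoc, hv2, mul_one]
end
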